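/- Let d : ℝ → ℝ satisfy the Leibniz rule d(xy) = x·d(y) + y·d(x) for all x, y ∈ ℝ, let 0 ≤ q < p be constants, and let f : ℝ \ (pℤ + q) → ℝ be a differentiable function which is p-periodic, i.e., f(x + p) = f(x) for all x ∈ ℝ \ (pℤ + q), and such that f'(x) ≠ 0 for all x ∈ ℝ \ (pℤ + q). If d(f(x)) = f'(x)·d(x) holds for all x ∈ ℝ \ (pℤ + q), then d is additive, and hence d is a standard derivation. -/

import Mathlib

lemma aux_nhds_bad (p q x : ℝ) (hp : 0 < p) (hx : ¬ ∃ k : ℤ, x = p * k + q) :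
    ∀ᶠ y in nhds x, ¬ ∃ k : ℤ, y = p * k + q := by
  rw [Metric.eventually_nhds_iff]
  set t := (x - q) / p with ht
  have hfl : (⌊t⌋ : ℝ) < t := by
    rcases lt_or_eq_of_le (Int.floor_le t) with h | h
    · exact h
    · exfalso; apply hx
      refine ⟨⌊t⌋, ?_⟩
      rw [h, ht]
      field_simp
      ring
  have hce : t < ⌊t⌋ + 1 := Int.lt_floor_add_one t
  refine ⟨p * min (t - ⌊t⌋) (⌊t⌋ + 1 - t),
    mul_pos hp (lt_min (by linarith) (by linarith)), ?_⟩
  rintro y hy ⟨k, hk⟩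
  have h1 : y - x = p * ((k : ℝ) - t) := by
    rw [hk, ht]; field_simp; ring
  rw [Real.dist_eq, h1, abs_mul, abs_of_pos hp] at hy
  have h3 : min (t - ⌊t⌋) (⌊t⌋ + 1 - t) ≤ |(k : ℝ) - t| := by
    rcases le_or_gt (k : ℝ) (⌊t⌋ : ℝ) with h | h
    · have : t - (k : ℝ) ≥ t - ⌊t⌋ := by linarith
      calc min (t - ⌊t⌋) (⌊t⌋ + 1 - t) ≤ t - ⌊t⌋ := min_le_left _ _
        _ ≤ t - k := by linarith
        _ ≤ |(k : ℝ) - t| := by rw [abs_sub_comm]; exact le_abs_self _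
    · have hk1 : (⌊t⌋ : ℝ) + 1 ≤ k := by exact_mod_cast Int.lt_iff_add_one_le.mp (by exact_mod_cast h)
      calc min (t - ⌊t⌋) (⌊t⌋ + 1 - t) ≤ ⌊t⌋ + 1 - t := min_le_right _ _
        _ ≤ (k : ℝ) - t := by linarith
        _ ≤ |(k : ℝ) - t| := le_abs_self _
  nlinarith [mul_le_mul_of_nonneg_left h3 hp.le]

lemma aux_deriv_shift (p q : ℝ) (hp : 0 < p) (f : ℝ → ℝ)
    (hper : ∀ x : ℝ, (¬ ∃ k : ℤ, x = p * k + q) → f (x + p) = f x)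
    (x : ℝ) (hx : ¬ ∃ k : ℤ, x = p * k + q) :
    deriv f (x + p) = deriv f x := by
  have hev : (fun y => f (y + p)) =ᶠ[nhds x] f :=
    (aux_nhds_bad p q x hp hx).mono (fun y hy => hper y hy)
  rw [← deriv_comp_add_const f p x]
  exact hev.deriv_eq

theorem additive_of_leibniz_of_periodic
    (d : ℝ → ℝ) (hleib : ∀ x y : ℝ, d (x * y) = x * d y + y * d x)
    (p q : ℝ) (hq : 0 ≤ q) (hqp : q < p)
    (f : ℝ → ℝ)
    (hf : ∀ x : ℝ, (¬ ∃ k : ℤ, x = p * k + q) → DifferentiableAt ℝ f x)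
    (hper : ∀ x : ℝ, (¬ ∃ k : ℤ, x = p * k + q) → f (x + p) = f x)
    (hf' : ∀ x : ℝ, (¬ ∃ k : ℤ, x = p * k + q) → deriv f x ≠ 0)
    (hdf : ∀ x : ℝ, (¬ ∃ k : ℤ, x = p * k + q) → d (f x) = deriv f x * d x) :
    ∀ x y : ℝ, d (x + y) = d x + d y := by
  have hp : 0 < p := lt_of_le_of_lt hq hqp
  -- basic values of d
  have d0 : d 0 = 0 := by have := hleib 0 0; simpa using this
  have d1 : d 1 = 0 := by have := hleib 1 1; simp at this; linarith
  have dm1 : d (-1) = 0 := by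
    have := hleib (-1) (-1); simp at this; linarith
  have dneg : ∀ u : ℝ, d (-u) = - d u := by
    intro u
    have := hleib (-1) u
    simp [dm1] at this
    linarith [this]
  have dinv : ∀ u : ℝ, u ≠ 0 → d u⁻¹ = - d u / u ^ 2 := by
    intro u hu
    have h := hleib u u⁻¹
    rw [mul_inv_cancel₀ hu, d1] at h
    have hu2 : u ^ 2 ≠ 0 := pow_ne_zero _ hu
    field_simp at h ⊢
    nlinarith [h]
  -- shift invariance of the bad set
  have hSsh : ∀ x : ℝ, (¬ ∃ k : ℤ, x = p * k + q) → (¬ ∃ k : ℤ, x + p = p * k + q) := by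
    rintro x hx ⟨k, hk⟩
    exact hx ⟨k - 1, by push_cast; linarith⟩
  -- d is p-periodic off the bad set
  have dper : ∀ x : ℝ, (¬ ∃ k : ℤ, x = p * k + q) → d (x + p) = d x := by
    intro x hx
    have h1 := hdf x hx
    have h2 := hdf (x + p) (hSsh x hx)
    rw [hper x hx, aux_deriv_shift p q hp f hper x hx, h1] at h2
    exact (mul_left_cancel₀ (hf' x hx) h2).symm
  have dpern : ∀ (n : ℕ) (x : ℝ), (¬ ∃ k : ℤ, x = p * k + q) → d (x + n * p) = d x := by
    intro n
    induction n with
    | zero => intro x _; simp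
    | succ n ih =>
      intro x hx
      have he : x + ((n : ℝ) + 1) * p = (x + p) + n * p := by ring
      push_cast
      rw [he, ih (x + p) (hSsh x hx), dper x hx]
  -- d vanishes on ℕ
  have hcount : ∀ c : ℝ, c ≠ 0 → ∃ x : ℝ,
      (¬ ∃ k : ℤ, x = p * k + q) ∧ (¬ ∃ k : ℤ, c * x = p * k + q) := by
    intro c hc
    by_contra h
    push_neg at h
    apply Cardinal.not_countable_real
    have hC : (Set.range (fun k : ℤ => p * k + q)).Countable := Set.countable_range _
    have hC2 : ((fun x : ℝ => c * x) ⁻¹' (Set.range fun k : ℤ => p * k + q)).Countable :=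
      hC.preimage (mul_right_injective₀ hc)
    refine Set.Countable.mono ?_ (hC.union hC2)
    intro x _
    by_cases h1 : ∃ k : ℤ, x = p * k + q
    · obtain ⟨k, hk⟩ := h1; exact Or.inl ⟨k, hk.symm⟩
    · obtain ⟨k, hk⟩ := h x (fun k hk => h1 ⟨k, hk⟩); exact Or.inr ⟨k, hk.symm⟩
  have dnat : ∀ m : ℕ, d m = 0 := by
    intro m
    rcases Nat.eq_zero_or_pos m with hm | hm
    · rw [hm]; exact_mod_cast d0
    · have hm0 : (m : ℝ) ≠ 0 := Nat.cast_ne_zero.mpr hm.ne'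
      obtain ⟨x, hx1, hx2⟩ := hcount (m : ℝ) hm0
      have h1 : d ((m : ℝ) * x + m * p) = d ((m : ℝ) * x) := dpern m ((m : ℝ) * x) hx2
      have h2 := hleib (m : ℝ) (x + p)
      have h3 := hleib (m : ℝ) x
      have he : (m : ℝ) * (x + p) = (m : ℝ) * x + m * p := by ring
      rw [he, h1, h3, dper x hx1] at h2
      have : p * d m = 0 := by linarith [h2]
      exact (mul_eq_zero.mp this).resolve_left hp.ne'
  -- d vanishes on ℤ
  have dint : ∀ k : ℤ, d k = 0 := by
    intro k
    obtain ⟨m, rfl | rfl⟩ := Int.eq_nat_or_neg k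
    · push_cast; exact dnat m
    · push_cast; rw [dneg, dnat m, neg_zero]
  have dintinv : ∀ k : ℤ, (k : ℝ) ≠ 0 → d ((k : ℝ)⁻¹) = 0 := by
    intro k hk
    rw [dinv _ hk, dint]; simp
  -- d p = 0
  have dp : d p = 0 := by
    have h23 : (¬ ∃ k : ℤ, p / 2 = p * k + q) ∨ (¬ ∃ k : ℤ, p / 3 = p * k + q) := by
      by_contra h
      push_neg at h
      obtain ⟨⟨k1, e1⟩, ⟨k2, e2⟩⟩ := h
      have h6 : p / 6 = p * ((k1 : ℝ) - k2) := by linarith [e1, e2]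
      have : (6 : ℝ) * ((k1 : ℝ) - k2) = 1 := by
        field_simp at h6
        nlinarith [h6, hp]
      have : (6 * (k1 - k2) : ℤ) = 1 := by exact_mod_cast this
      omega
    have main : ∀ m : ℕ, 2 ≤ m → (¬ ∃ k : ℤ, p / m = p * k + q) → d p = 0 := by
      intro m hm hx
      have hm0 : (m : ℝ) ≠ 0 := by positivity
      have h1 := dper (p / m) hx
      have hdiv : d (p / m) = d p / m := by
        rw [div_eq_mul_inv, hleib p ((m : ℝ)⁻¹), dinv _ hm0, dnat m]
        field_simp
        ring
      have he : p / m + p = ((m : ℝ) + 1) * (p / m) := by field_simp; ring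
      have h2 := hleib ((m : ℝ) + 1) (p / m)
      have hdm1 : d ((m : ℝ) + 1) = 0 := by
        have : ((m : ℝ) + 1) = ((m + 1 : ℕ) : ℝ) := by push_cast; ring
        rw [this]; exact dnat (m + 1)
      rw [hdm1] at h2
      rw [he, h2, hdiv] at h1
      have h5 : (m : ℝ) * (d p / m) = 0 := by linear_combination h1
      have h6 : (m : ℝ) * (d p / m) = d p := by field_simp
      rw [h6] at h5; exact h5
    rcases h23 with h | h
    · exact main 2 (le_refl 2) (by push_cast at h ⊢; exact h)
    · exact main 3 (by norm_num) (by push_cast at h ⊢; exact h)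
  -- generic step towards period 1
  have step : ∀ (n : ℕ) (t : ℝ), t ≠ 0 → 0 < n →
      (¬ ∃ k : ℤ, (n : ℝ) * p / t = p * k + q) → d (t + 1) = d t := by
    intro n t ht hn hx
    have hn0 : (n : ℝ) ≠ 0 := Nat.cast_ne_zero.mpr hn.ne'
    set x := (n : ℝ) * p / t with hxdef
    have hx0 : x ≠ 0 := div_ne_zero (mul_ne_zero hn0 hp.ne') ht
    have h1 : d (x + n * p) = d x := dpern n x hx
    have he : x + (n : ℝ) * p = x * (t + 1) := by
      rw [hxdef]; field_simp; ring
    rw [he] at h1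
    have hl := hleib x (t + 1)
    have hdx : d x = -((n : ℝ) * p * d t) / t ^ 2 := by
      have h2 : x = ((n : ℝ) * p) * t⁻¹ := by rw [hxdef, div_eq_mul_inv]
      rw [h2, hleib ((n : ℝ) * p) t⁻¹, dinv t ht, hleib (n : ℝ) p, dp, dnat n]
      field_simp
      try ring
    rw [h1] at hl
    -- hl : d x = x * d (t+1) + (t+1) * d x
    have e0 : x * d (t + 1) = -t * d x := by linear_combination -hl
    have e1 : x * d (t + 1) = x * d t := by
      rw [e0, hdx, hxdef]
      field_simp
      try ring
    exact mul_left_cancel₀ hx0 e1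
  -- d has period 1 everywhere
  have dper1 : ∀ t : ℝ, d (t + 1) = d t := by
    intro t
    by_cases ht : t = 0
    · rw [ht, zero_add, d1, d0]
    by_cases h1 : ∃ k : ℤ, (1 : ℝ) * p / t = p * k + q
    · by_cases h2 : ∃ k : ℤ, (2 : ℝ) * p / t = p * k + q
      · obtain ⟨k1, e1⟩ := h1
        obtain ⟨k2, e2⟩ := h2
        have hpt : p * t⁻¹ = p * ((k2 : ℝ) - k1) := by
          have h12 : 2 * p / t - 1 * p / t = (p * k2 + q) - (p * k1 + q) := by rw [e1, e2]
          rw [mul_comm]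
          linear_combination h12
        have hmR : t⁻¹ = ((k2 - k1 : ℤ) : ℝ) := by
          have h := mul_left_cancel₀ hp.ne' hpt
          rw [h]; push_cast; ring
        have hm0 : ((k2 - k1 : ℤ) : ℝ) ≠ 0 := by rw [← hmR]; exact inv_ne_zero ht
        have htm : t = ((k2 - k1 : ℤ) : ℝ)⁻¹ := by rw [← hmR, inv_inv]
        have dt : d t = 0 := by rw [htm]; exact dintinv _ hm0
        have dt1 : d (t + 1) = 0 := by
          have hm0' : (k2 : ℝ) - (k1 : ℝ) ≠ 0 := by push_cast at hm0; exact hm0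
          have he : t + 1 = ((k2 - k1 + 1 : ℤ) : ℝ) * ((k2 - k1 : ℤ) : ℝ)⁻¹ := by
            rw [htm]
            push_cast
            field_simp
            try ring
          rw [he, hleib, dintinv _ hm0, dint]
          ring
        rw [dt, dt1]
      · exact step 2 t ht (by norm_num) (by push_cast at h2 ⊢; exact h2)
    · exact step 1 t ht (by norm_num) (by push_cast at h1 ⊢; exact h1)
  -- key identity
  have key : ∀ x : ℝ, d (x ^ 2 + 2 * x) = d (x ^ 2) + d (2 * x) := by
    intro x
    have h1 : d (x ^ 2 + 2 * x + 1) = d (x ^ 2 + 2 * x) := dper1 _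
    have h2 : x ^ 2 + 2 * x + 1 = (x + 1) * (x + 1) := by ring
    have h3 := hleib (x + 1) (x + 1)
    have h4 := dper1 x
    have h5 := hleib x x
    have h6 := hleib 2 x
    have d2 : d 2 = 0 := by
      have := dnat 2; push_cast at this; exact this
    have hx2 : x ^ 2 = x * x := sq x
    rw [← h1, h2, h3, h4, hx2, h5, h6, d2]
    ring
  -- conclude additivity
  intro a b
  by_cases ha : a = 0
  · rw [ha, d0, zero_add, zero_add]
  by_cases hb : b = 0
  · rw [hb, d0, add_zero, add_zero]
  obtain ⟨c, x, e2, e3⟩ : ∃ c x : ℝ, c * x ^ 2 = a ∧ c * (2 * x) = b :=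
    ⟨b ^ 2 / (4 * a), 2 * a / b, by field_simp; ring, by field_simp; ring⟩
  have e1 : a + b = c * (x ^ 2 + 2 * x) := by rw [← e2, ← e3]; ring
  calc d (a + b) = d (c * (x ^ 2 + 2 * x)) := by rw [e1]
    _ = c * (d (x ^ 2) + d (2 * x)) + (x ^ 2 + 2 * x) * d c := by rw [hleib, key]
    _ = d (c * x ^ 2) + d (c * (2 * x)) := by rw [hleib c (x ^ 2), hleib c (2 * x)]; ring
    _ = d a + d b := by rw [e2, e3]
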